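/- arXiv:2403.19627 — 7 statements merged into one kernel-verified Lean document; each statement's English description precedes it below -/
import Mathlib

section
/- Let n ≥ 4. Suppose s : Fin n → Fin n → ℝ satisfies s i j = s j i and s i i = 0, and m : Fin n → Fin n → Fin n → Fin n → ℝ satisfies m i j k l = - (m j i k l). Assume that for all pairwise distinct i, j, k, l, s i k + s i l + s j k + s j l - 2 * m i j k l ≥ 0. Define Ric i = ∑_{j} s i j. Then for all pairwise distinct i, j, k one has Ric i + Ric j - 2 * s i j + (n - 4) * (s i k + s j k) ≥ 0. -/
theorem stmt_1 (n : ℕ) (hn : 4 ≤ n)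
    (s : Fin n → Fin n → ℝ) (m : Fin n → Fin n → Fin n → Fin n → ℝ)
    (hsym : ∀ i j, s i j = s j i) (hdiag : ∀ i, s i i = 0)
    (hanti : ∀ i j k l, m i j k l = - (m j i k l))
    (hWPIC : ∀ i j k l : Fin n, i ≠ j → i ≠ k → i ≠ l → j ≠ k → j ≠ l → k ≠ l →
      s i k + s i l + s j k + s j l - 2 * m i j k l ≥ 0)
    (Ric : Fin n → ℝ) (hRic : ∀ i, Ric i = ∑ j, s i j) :
    ∀ i j k : Fin n, i ≠ j → i ≠ k → j ≠ k →
      Ric i + Ric j - 2 * s i j + ((n : ℝ) - 4) * (s i k + s j k) ≥ 0 := by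
  intro i j k hij hik hjk
  set T : Finset (Fin n) := Finset.univ \ {i, j, k} with hT
  have hsub : ({i, j, k} : Finset (Fin n)) ⊆ Finset.univ := Finset.subset_univ _
  have hcard3 : ({i, j, k} : Finset (Fin n)).card = 3 := by
    rw [Finset.card_insert_of_notMem (by simp [hij, hik]),
        Finset.card_insert_of_notMem (by simp [hjk]), Finset.card_singleton]
  have hcardT : T.card = n - 3 := by
    rw [hT, Finset.card_sdiff_of_subset hsub, hcard3, Finset.card_univ, Fintype.card_fin]
  have key : ∀ l ∈ T, 0 ≤ s i l + s j l + (s i k + s j k) := by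
    intro l hl
    simp only [hT, Finset.mem_sdiff, Finset.mem_insert, Finset.mem_singleton] at hl
    push_neg at hl
    obtain ⟨-, hli, hlj, hlk⟩ := hl
    have h1 := hWPIC i j k l hij hik (Ne.symm hli) hjk (Ne.symm hlj) (Ne.symm hlk)
    have h2 := hWPIC j i k l (Ne.symm hij) hjk (Ne.symm hlj) hik (Ne.symm hli) (Ne.symm hlk)
    have ha := hanti i j k l
    linarith
  have hsum : 0 ≤ ∑ l ∈ T, (s i l + s j l + (s i k + s j k)) :=
    Finset.sum_nonneg key
  have hsplit : ∑ l ∈ T, (s i l + s j l + (s i k + s j k))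
      = (∑ l ∈ T, (s i l + s j l)) + (T.card : ℝ) * (s i k + s j k) := by
    rw [Finset.sum_add_distrib, Finset.sum_const, nsmul_eq_mul]
  have hijk : ∀ f : Fin n → ℝ, ∑ l ∈ ({i, j, k} : Finset (Fin n)), f l = f i + f j + f k := by
    intro f
    rw [Finset.sum_insert (by simp [hij, hik]), Finset.sum_insert (by simp [hjk]),
        Finset.sum_singleton]
    ring
  have hRi : Ric i = (∑ l ∈ T, s i l) + (s i j + s i k) := by
    rw [hRic i, ← Finset.sum_sdiff hsub, hijk (s i), hdiag i, hT]
    ring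
  have hRj : Ric j = (∑ l ∈ T, s j l) + (s i j + s j k) := by
    rw [hRic j, ← Finset.sum_sdiff hsub, hijk (s j), hdiag j, hsym j i, hT]
    ring
  have hcardT' : (T.card : ℝ) = (n : ℝ) - 3 := by
    rw [hcardT]
    have : (3 : ℕ) ≤ n := by omega
    push_cast [Nat.cast_sub this]
    ring
  have hST : ∑ l ∈ T, (s i l + s j l) = (∑ l ∈ T, s i l) + ∑ l ∈ T, s j l :=
    Finset.sum_add_distrib
  rw [hsplit, hST, hcardT'] at hsum
  linarith
end

section
/- Let n ≥ 4. Suppose s : Fin n → Fin n → ℝ satisfies s i j = s j i and s i i = 0, and m : Fin n → Fin n → Fin n → Fin n → ℝ satisfies m i j k l = - (m j i k l). Assume that for all pairwise distinct i, j, k, l, s i k + s i l + s j k + s j l - 2 * m i j k l ≥ 0. Define Ric i = ∑_{j} s i j. Then for all distinct i, j one has Ric i + Ric j - 2 * s i j ≥ 0. -/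
theorem stmt_2 (n : ℕ) (hn : 4 ≤ n)
    (s : Fin n → Fin n → ℝ) (m : Fin n → Fin n → Fin n → Fin n → ℝ)
    (hsym : ∀ i j, s i j = s j i) (hdiag : ∀ i, s i i = 0)
    (hanti : ∀ i j k l, m i j k l = - (m j i k l))
    (hWPIC : ∀ i j k l : Fin n, i ≠ j → i ≠ k → i ≠ l → j ≠ k → j ≠ l → k ≠ l →
      s i k + s i l + s j k + s j l - 2 * m i j k l ≥ 0)
    (Ric : Fin n → ℝ) (hRic : ∀ i, Ric i = ∑ j, s i j) :
    ∀ i j : Fin n, i ≠ j → Ric i + Ric j - 2 * s i j ≥ 0 := by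
  intro i j hij
  set f : Fin n → ℝ := fun k => s i k + s j k with hf
  set S : Finset (Fin n) := Finset.univ \ {i, j} with hS
  have hmem : ∀ k, k ∈ S ↔ k ≠ i ∧ k ≠ j := by
    intro k; simp [hS, not_or]
  -- pairwise nonnegativity on S
  have key : ∀ k ∈ S, ∀ l ∈ S, k ≠ l → f k + f l ≥ 0 := by
    intro k hk l hl hkl
    rw [hmem] at hk hl
    have h1 := hWPIC i j k l hij (Ne.symm hk.1) (Ne.symm hl.1) (Ne.symm hk.2) (Ne.symm hl.2) hkl
    have h2 := hWPIC j i k l (Ne.symm hij) (Ne.symm hk.2) (Ne.symm hl.2) (Ne.symm hk.1) (Ne.symm hl.1) hkl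
    have h3 := hanti i j k l
    simp only [hf]
    linarith
  -- the goal equals the sum of f over S
  have hsub : ({i, j} : Finset (Fin n)) ⊆ Finset.univ := Finset.subset_univ _
  have hsplit : ∑ k ∈ S, f k = Ric i + Ric j - 2 * s i j := by
    have h1 : ∑ k ∈ S, f k = ∑ k, f k - ∑ k ∈ ({i,j} : Finset (Fin n)), f k := by
      rw [eq_sub_iff_add_eq, hS, Finset.sum_sdiff hsub]
    have h2 : ∑ k ∈ ({i,j} : Finset (Fin n)), f k = f i + f j := by
      rw [Finset.sum_pair hij]
    have h3 : ∑ k, f k = Ric i + Ric j := by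
      rw [hRic, hRic, ← Finset.sum_add_distrib]
    rw [h1, h2, h3]
    simp only [hf]
    rw [hdiag i, hdiag j, hsym j i]
    ring
  rw [← hsplit]
  -- cardinality
  have hcard : 2 ≤ S.card := by
    have hc2 : ({i, j} : Finset (Fin n)).card = 2 := by
      rw [Finset.card_insert_of_notMem (by simp [hij]), Finset.card_singleton]
    have := Finset.card_sdiff_of_subset hsub
    rw [hc2, Finset.card_univ, Fintype.card_fin] at this
    rw [hS] at *
    omega
  -- at most one negative term
  by_cases hall : ∀ k ∈ S, 0 ≤ f k
  · exact Finset.sum_nonneg hall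
  · push_neg at hall
    obtain ⟨a, ha, hfa⟩ := hall
    have hrest : ∀ k ∈ S.erase a, 0 ≤ f k := by
      intro k hk
      have hk' := Finset.mem_of_mem_erase hk
      have hne := Finset.ne_of_mem_erase hk
      have := key k hk' a ha hne
      linarith
    obtain ⟨b, hb⟩ : (S.erase a).Nonempty := by
      rw [← Finset.card_pos, Finset.card_erase_of_mem ha]; omega
    have hb' := Finset.mem_of_mem_erase hb
    have hbne := Finset.ne_of_mem_erase hb
    have hkey := key a ha b hb' (Ne.symm hbne)
    have hsum : ∑ k ∈ S, f k = f a + f b + ∑ k ∈ (S.erase a).erase b, f k := by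
      rw [← Finset.add_sum_erase _ f ha, ← Finset.add_sum_erase _ f hb]
      ring
    rw [hsum]
    have : 0 ≤ ∑ k ∈ (S.erase a).erase b, f k :=
      Finset.sum_nonneg fun k hk => hrest k (Finset.mem_of_mem_erase hk)
    linarith
end

section
/- Let n ≥ 4. Suppose s : Fin n → Fin n → ℝ satisfies s i j = s j i and s i i = 0, and m : Fin n → Fin n → Fin n → Fin n → ℝ satisfies m i j k l = - (m j i k l). Assume that for all pairwise distinct i, j, k, l, s i k + s i l + s j k + s j l - 2 * m i j k l ≥ 0. Define Ric i = ∑_{j} s i j and R = ∑_{i} Ric i. Then for every index i one has (n - 4) * Ric i + R ≥ 0. -/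
theorem stmt_3 (n : ℕ) (hn : 4 ≤ n)
    (s : Fin n → Fin n → ℝ) (m : Fin n → Fin n → Fin n → Fin n → ℝ)
    (hsym : ∀ i j, s i j = s j i) (hdiag : ∀ i, s i i = 0)
    (hanti : ∀ i j k l, m i j k l = - (m j i k l))
    (hWPIC : ∀ i j k l : Fin n, i ≠ j → i ≠ k → i ≠ l → j ≠ k → j ≠ l → k ≠ l →
      s i k + s i l + s j k + s j l - 2 * m i j k l ≥ 0)
    (Ric : Fin n → ℝ) (hRic : ∀ i, Ric i = ∑ j, s i j)
    (R : ℝ) (hR : R = ∑ i, Ric i) :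
    ∀ i : Fin n, ((n : ℝ) - 4) * Ric i + R ≥ 0 := by
  intro i
  have key : ∀ j : Fin n, j ≠ i → Ric i + Ric j - 2 * s i j ≥ 0 := by
    intro j hj
    set B : Finset (Fin n) := (Finset.univ.erase i).erase j with hB
    have hiB : i ∉ B := by simp [hB]
    have hjB : j ∉ B := by simp [hB]
    have hjmem : j ∈ Finset.univ.erase i := Finset.mem_erase.mpr ⟨hj, Finset.mem_univ j⟩
    have hBcard : B.card = n - 2 := by
      rw [hB, Finset.card_erase_of_mem hjmem, Finset.card_erase_of_mem (Finset.mem_univ i)]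
      simp
      omega
    -- the sum of the WPIC quantities over k,l ∈ B, k ≠ l
    have hT : 0 ≤ ∑ k ∈ B, ∑ l ∈ B.erase k,
        (s k i + s k j + s l i + s l j - 2 * m k l i j) := by
      apply Finset.sum_nonneg
      intro k hk
      apply Finset.sum_nonneg
      intro l hl
      have hkl : l ≠ k := Finset.ne_of_mem_erase hl
      have hlB : l ∈ B := Finset.mem_of_mem_erase hl
      have hki : k ≠ i := by rintro rfl; exact hiB hk
      have hkj : k ≠ j := by rintro rfl; exact hjB hk
      have hli : l ≠ i := by rintro rfl; exact hiB hlB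
      have hlj : l ≠ j := by rintro rfl; exact hjB hlB
      exact hWPIC k l i j (Ne.symm hkl) hki hkj hli hlj (Ne.symm hj)
    -- m terms cancel
    have hmdiag : ∀ k, m k k i j = 0 := by
      intro k
      have := hanti k k i j
      linarith
    have hminner : ∀ k, ∑ l ∈ B.erase k, m k l i j = ∑ l ∈ B, m k l i j := by
      intro k
      by_cases hk : k ∈ B
      · rw [Finset.sum_erase_eq_sub hk, hmdiag, sub_zero]
      · rw [Finset.erase_eq_of_notMem hk]
    have hmzero : ∑ k ∈ B, ∑ l ∈ B, m k l i j = 0 := by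
      have h1 : ∑ k ∈ B, ∑ l ∈ B, m k l i j = ∑ l ∈ B, ∑ k ∈ B, m k l i j :=
        Finset.sum_comm
      have h2 : ∑ l ∈ B, ∑ k ∈ B, m k l i j = -∑ k ∈ B, ∑ l ∈ B, m k l i j := by
        rw [← Finset.sum_neg_distrib]
        apply Finset.sum_congr rfl
        intro l _
        rw [← Finset.sum_neg_distrib]
        apply Finset.sum_congr rfl
        intro k _
        exact hanti k l i j
      linarith [h1, h2]
    -- value of C
    have hC : ∑ k ∈ B, (s k i + s k j) = Ric i + Ric j - 2 * s i j := by
      rw [hB, Finset.sum_erase_eq_sub hjmem,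
        Finset.sum_erase_eq_sub (Finset.mem_univ i)]
      have h1 : ∑ k : Fin n, (s k i + s k j) = Ric i + Ric j := by
        rw [Finset.sum_add_distrib, hRic i, hRic j]
        congr 1 <;> exact Finset.sum_congr rfl fun k _ => hsym k _
      rw [h1, hdiag i, hsym j i, hdiag j]
      ring
    set C := ∑ k ∈ B, (s k i + s k j) with hCdef
    -- compute the big sum
    have hTval : ∑ k ∈ B, ∑ l ∈ B.erase k,
        (s k i + s k j + s l i + s l j - 2 * m k l i j)
        = 2 * ((n : ℝ) - 3) * C := by
      have hstep : ∀ k ∈ B, ∑ l ∈ B.erase k,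
          (s k i + s k j + s l i + s l j - 2 * m k l i j)
          = ((n : ℝ) - 3) * (s k i + s k j) + (C - (s k i + s k j))
            - 2 * ∑ l ∈ B, m k l i j := by
        intro k hk
        have hcardek : (((B.erase k).card : ℕ) : ℝ) = (n : ℝ) - 3 := by
          rw [Finset.card_erase_of_mem hk, hBcard]
          have h3 : 3 ≤ n := by omega
          have : n - 2 - 1 = n - 3 := by omega
          rw [this, Nat.cast_sub h3]
          norm_num
        calc ∑ l ∈ B.erase k, (s k i + s k j + s l i + s l j - 2 * m k l i j)
            = ∑ _l ∈ B.erase k, (s k i + s k j) + ∑ l ∈ B.erase k, (s l i + s l j)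
              - ∑ l ∈ B.erase k, 2 * m k l i j := by
              rw [← Finset.sum_add_distrib, ← Finset.sum_sub_distrib]
              exact Finset.sum_congr rfl fun l _ => by ring
          _ = ((n : ℝ) - 3) * (s k i + s k j) + (C - (s k i + s k j))
              - 2 * ∑ l ∈ B, m k l i j := by
              rw [Finset.sum_const, nsmul_eq_mul, hcardek,
                Finset.sum_erase_eq_sub hk, ← Finset.mul_sum, hminner k, ← hCdef]
      calc ∑ k ∈ B, ∑ l ∈ B.erase k, (s k i + s k j + s l i + s l j - 2 * m k l i j)
          = ∑ k ∈ B, (((n : ℝ) - 3) * (s k i + s k j) + (C - (s k i + s k j))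
              - 2 * ∑ l ∈ B, m k l i j) := Finset.sum_congr rfl hstep
        _ = ∑ k ∈ B, ((n : ℝ) - 3) * (s k i + s k j)
              + (∑ _k ∈ B, C - ∑ k ∈ B, (s k i + s k j))
              - ∑ k ∈ B, 2 * ∑ l ∈ B, m k l i j := by
              rw [← Finset.sum_sub_distrib, ← Finset.sum_add_distrib,
                ← Finset.sum_sub_distrib]
        _ = ((n : ℝ) - 3) * C + ((B.card : ℝ) * C - C)
              - 2 * ∑ k ∈ B, ∑ l ∈ B, m k l i j := by
              rw [← Finset.mul_sum, ← Finset.mul_sum, Finset.sum_const,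
                nsmul_eq_mul, ← hCdef]
        _ = 2 * ((n : ℝ) - 3) * C := by
              rw [hmzero, hBcard]
              have h2 : 2 ≤ n := by omega
              rw [Nat.cast_sub h2]
              push_cast
              ring
    rw [hTval] at hT
    have hn3 : (0:ℝ) < (n : ℝ) - 3 := by
      have : (4:ℝ) ≤ (n : ℝ) := by exact_mod_cast hn
      linarith
    nlinarith [hT, hn3]
  -- sum the key inequality over j ≠ i
  have hsum : 0 ≤ ∑ j ∈ Finset.univ.erase i, (Ric i + Ric j - 2 * s i j) := by
    apply Finset.sum_nonneg
    intro j hj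
    exact key j (Finset.ne_of_mem_erase hj)
  have hval : ∑ j ∈ Finset.univ.erase i, (Ric i + Ric j - 2 * s i j)
      = ((n : ℝ) - 4) * Ric i + R := by
    have e1 : ∑ j ∈ Finset.univ.erase i, (Ric i + Ric j - 2 * s i j)
        = ∑ _j ∈ Finset.univ.erase i, Ric i + ∑ j ∈ Finset.univ.erase i, Ric j
          - ∑ j ∈ Finset.univ.erase i, 2 * s i j := by
      rw [← Finset.sum_add_distrib, ← Finset.sum_sub_distrib]
    rw [e1, Finset.sum_const, nsmul_eq_mul, ← Finset.mul_sum,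
      Finset.sum_erase_eq_sub (Finset.mem_univ i),
      Finset.sum_erase_eq_sub (Finset.mem_univ i)]
    have hcard : ((Finset.univ.erase i).card : ℝ) = (n : ℝ) - 1 := by
      rw [Finset.card_erase_of_mem (Finset.mem_univ i)]
      have h1 : 1 ≤ n := by omega
      simp [Nat.cast_sub h1]
    rw [hcard, ← hR, ← hRic i, hdiag i]
    ring
  rw [hval] at hsum
  linarith
end

section
/- Let A₁, A₂, A₃, B₁, B₂, B₃, C₁, C₂, C₃, R be real numbers with R = 4(A₁ + A₂ + A₃) and R = 4(C₁ + C₂ + C₃). Assume A₁ ≥ 0, A₂ ≥ 0, A₃ ≥ 0, C₁ ≥ 0, C₂ ≥ 0, C₃ ≥ 0 and 0 ≤ B₁ ≤ B₂ ≤ B₃, and set u = R + 4B₁ - 4(B₂ + B₃). Then (1/2)R² + 8(B₁² + B₂² + B₃²) + 8(A₁ + C₁)B₁ + 16B₂B₃ - 8(A₂ + C₂)B₂ - 8(A₃ + C₃)B₃ - 16B₁(B₂ + B₃) ≥ (1/2)u². -/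
theorem stmt_5 (A₁ A₂ A₃ B₁ B₂ B₃ C₁ C₂ C₃ R u : ℝ)
    (hA : R = 4 * (A₁ + A₂ + A₃)) (hC : R = 4 * (C₁ + C₂ + C₃))
    (hA₁ : A₁ ≥ 0) (hA₂ : A₂ ≥ 0) (hA₃ : A₃ ≥ 0)
    (hC₁ : C₁ ≥ 0) (hC₂ : C₂ ≥ 0) (hC₃ : C₃ ≥ 0)
    (hB₁ : 0 ≤ B₁) (hB₁₂ : B₁ ≤ B₂) (hB₂₃ : B₂ ≤ B₃)
    (hu : u = R + 4 * B₁ - 4 * (B₂ + B₃)) :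
    (1/2) * R^2 + 8 * (B₁^2 + B₂^2 + B₃^2) + 8 * (A₁ + C₁) * B₁ + 16 * B₂ * B₃
      - 8 * (A₂ + C₂) * B₂ - 8 * (A₃ + C₃) * B₃ - 16 * B₁ * (B₂ + B₃)
    ≥ (1/2) * u^2 := by
  subst hu hA
  nlinarith [mul_nonneg hA₂ (by linarith : B₃ - B₁ ≥ 0), mul_nonneg hA₃ (by linarith : B₂ - B₁ ≥ 0),
    mul_nonneg hA₁ (by linarith : B₂ + B₃ ≥ 0), mul_nonneg hC₂ (by linarith : B₃ - B₁ ≥ 0),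
    mul_nonneg hC₃ (by linarith : B₂ - B₁ ≥ 0), mul_nonneg hC₁ (by linarith : B₂ + B₃ ≥ 0)]
end

section
/- Let B₁, B₂, B₃, R be real numbers with 0 ≤ B₁ ≤ B₂ ≤ B₃ and R + 4B₁ - 4(B₂ + B₃) ≥ 0. Then 4(B₁² + B₂² + B₃²) + R²/4 ≤ R². -/
theorem stmt_6 (B₁ B₂ B₃ R : ℝ)
    (hB₁ : 0 ≤ B₁) (hB₁₂ : B₁ ≤ B₂) (hB₂₃ : B₂ ≤ B₃)
    (hRc : R + 4 * B₁ - 4 * (B₂ + B₃) ≥ 0) :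
    4 * (B₁^2 + B₂^2 + B₃^2) + R^2 / 4 ≤ R^2 := by
  nlinarith [sq_nonneg (B₂ - B₃), sq_nonneg (B₂ + B₃), sq_nonneg B₁, mul_nonneg hB₁ (hB₁.trans hB₁₂), mul_nonneg (hB₁.trans hB₁₂) ((hB₁.trans hB₁₂).trans hB₂₃), mul_nonneg hRc hRc, mul_nonneg hB₁ hRc, sq_nonneg (R - 4*(B₂+B₃-B₁))]
end

section
/- Let A₁, A₂, A₃, B₁, B₂, B₃, C₁, C₂, C₃, R be real numbers with R = 4(A₁ + A₂ + A₃), R = 4(C₁ + C₂ + C₃), A₁ + A₂ ≥ 0, C₁ + C₂ ≥ 0, and B₃ ≥ 0. Then 2(4(B₁² + B₂² + B₃²) + R²/4) - 8(A₃ + C₃)B₃ - 16B₁B₂ ≥ (1/2)(R - 4B₃)². -/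
theorem stmt_10 (A₁ A₂ A₃ B₁ B₂ B₃ C₁ C₂ C₃ R : ℝ)
    (hA : R = 4 * (A₁ + A₂ + A₃)) (hC : R = 4 * (C₁ + C₂ + C₃))
    (hPIC₁ : A₁ + A₂ ≥ 0) (hPIC₂ : C₁ + C₂ ≥ 0) (hB₃ : B₃ ≥ 0) :
    2 * (4 * (B₁^2 + B₂^2 + B₃^2) + R^2 / 4) - 8 * (A₃ + C₃) * B₃ - 16 * B₁ * B₂
    ≥ (1/2) * (R - 4 * B₃)^2 := by
  nlinarith [sq_nonneg (B₁ - B₂), mul_nonneg hPIC₁ hB₃, mul_nonneg hPIC₂ hB₃]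
end

section
/- Let T > 0 and let m₁, m₂, m₃ : ℝ → ℝ be differentiable functions satisfying, for all t ∈ [0, T), the ODE system m₁'(t) = m₁(t)² + m₂(t)m₃(t), m₂'(t) = m₂(t)² + m₁(t)m₃(t), m₃'(t) = m₃(t)² + m₁(t)m₂(t), together with m₁(t) ≤ m₂(t) ≤ m₃(t) for all t ∈ [0, T). If 2m₁(0) + m₂(0) + m₃(0) ≥ 0, then 2m₁(t) + m₂(t) + m₃(t) ≥ 0 for all t ∈ [0, T). -/
theorem stmt_16 (T : ℝ) (hT : 0 < T) (m₁ m₂ m₃ : ℝ → ℝ)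
    (hd₁ : Differentiable ℝ m₁) (hd₂ : Differentiable ℝ m₂) (hd₃ : Differentiable ℝ m₃)
    (hode₁ : ∀ t ∈ Set.Ico (0 : ℝ) T, deriv m₁ t = (m₁ t)^2 + m₂ t * m₃ t)
    (hode₂ : ∀ t ∈ Set.Ico (0 : ℝ) T, deriv m₂ t = (m₂ t)^2 + m₁ t * m₃ t)
    (hode₃ : ∀ t ∈ Set.Ico (0 : ℝ) T, deriv m₃ t = (m₃ t)^2 + m₁ t * m₂ t)
    (hord : ∀ t ∈ Set.Ico (0 : ℝ) T, m₁ t ≤ m₂ t ∧ m₂ t ≤ m₃ t)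
    (h0 : 2 * m₁ 0 + m₂ 0 + m₃ 0 ≥ 0) :
    ∀ t ∈ Set.Ico (0 : ℝ) T, 2 * m₁ t + m₂ t + m₃ t ≥ 0 := by
  set f : ℝ → ℝ := fun t => 2 * m₁ t + m₂ t + m₃ t with hf
  have hdf : Differentiable ℝ f := by
    exact ((hd₁.const_mul 2).add hd₂).add hd₃
  have hderiv : ∀ t ∈ Set.Ico (0 : ℝ) T, deriv f t =
      2 * deriv m₁ t + deriv m₂ t + deriv m₃ t := by
    intro t ht
    have h1 := (hd₁ t).hasDerivAt
    have h2 := (hd₂ t).hasDerivAt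
    have h3 := (hd₃ t).hasDerivAt
    have : HasDerivAt f (2 * deriv m₁ t + deriv m₂ t + deriv m₃ t) t :=
      ((h1.const_mul 2).add h2).add h3
    exact this.deriv
  have hmono : MonotoneOn f (Set.Ico 0 T) := by
    apply monotoneOn_of_deriv_nonneg (convex_Ico 0 T) hdf.continuous.continuousOn
      (fun t _ => hdf t |>.differentiableWithinAt)
    intro t ht
    rw [interior_Ico] at ht
    have ht' : t ∈ Set.Ico (0 : ℝ) T := ⟨le_of_lt ht.1, ht.2⟩
    rw [hderiv t ht', hode₁ t ht', hode₂ t ht', hode₃ t ht']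
    nlinarith [sq_nonneg (4 * m₁ t + m₂ t + m₃ t), sq_nonneg (m₂ t + m₃ t)]
  intro t ht
  have h0mem : (0 : ℝ) ∈ Set.Ico (0 : ℝ) T := ⟨le_refl 0, hT⟩
  have := hmono h0mem ht ht.1
  simpa [hf] using le_trans h0 this
end
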